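/- Let a, b be elements of the Ore extension S = 𝕆[y][x;σ,δ] with deg_y(σ(y)) = s > 1, where a has x-degree m > 0 with leading coefficient a_m, and b ≠ 0 has x-degree n with leading coefficient b_n. If ab = ba, then a_m σᵐ(b_n) = b_n σⁿ(a_m), and consequently deg_y(a_m) + sᵐ·deg_y(b_n) = deg_y(b_n) + sⁿ·deg_y(a_m), so deg_y(b_n) is uniquely determined by m, n, s and deg_y(a_m). -/

import Mathlib

/-- The octonions, realized via the Cayley–Dickson doubling of the real quaternions. -/
def Octonion : Type := Quaternion ℝ × Quaternion ℝ

noncomputable instance : AddCommGroup Octonion :=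
  inferInstanceAs (AddCommGroup (Quaternion ℝ × Quaternion ℝ))

noncomputable instance : Module ℝ Octonion :=
  inferInstanceAs (Module ℝ (Quaternion ℝ × Quaternion ℝ))

/-- Cayley–Dickson multiplication on pairs of quaternions. -/
noncomputable def Octonion.omul (a b : Quaternion ℝ × Quaternion ℝ) :
    Quaternion ℝ × Quaternion ℝ :=
  (a.1 * b.1 - star b.2 * a.2, b.2 * a.1 + a.2 * star b.1)

noncomputable instance : One Octonion := ⟨((1 : Quaternion ℝ), (0 : Quaternion ℝ))⟩

theorem Octonion.omul_add (a b c : Quaternion ℝ × Quaternion ℝ) :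
    Octonion.omul a (b + c) = Octonion.omul a b + Octonion.omul a c := by
  unfold Octonion.omul
  refine Prod.ext ?_ ?_ <;>
    simp only [Prod.fst_add, Prod.snd_add, mul_add, add_mul, star_add] <;> abel

theorem Octonion.add_omul (a b c : Quaternion ℝ × Quaternion ℝ) :
    Octonion.omul (a + b) c = Octonion.omul a c + Octonion.omul b c := by
  unfold Octonion.omul
  refine Prod.ext ?_ ?_ <;>
    simp only [Prod.fst_add, Prod.snd_add, mul_add, add_mul, star_add] <;> abel

theorem Octonion.zero_omul (a : Quaternion ℝ × Quaternion ℝ) :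
    Octonion.omul 0 a = 0 := by
  unfold Octonion.omul; refine Prod.ext ?_ ?_ <;> simp

theorem Octonion.omul_zero (a : Quaternion ℝ × Quaternion ℝ) :
    Octonion.omul a 0 = 0 := by
  unfold Octonion.omul; refine Prod.ext ?_ ?_ <;> simp

noncomputable instance : NonUnitalNonAssocRing Octonion :=
  { (inferInstanceAs (AddCommGroup Octonion) : AddCommGroup Octonion) with
    mul := Octonion.omul
    left_distrib := fun a b c => Octonion.omul_add a b c
    right_distrib := fun a b c => Octonion.add_omul a b c
    zero_mul := fun a => Octonion.zero_omul a
    mul_zero := fun a => Octonion.omul_zero a }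

/-- `R = 𝕆[y]`, the polynomial ring over the octonions, as finitely supported
sequences of octonion coefficients. -/
noncomputable abbrev OctPoly : Type := ℕ →₀ Octonion

/-- The convolution product on `𝕆[y]`. -/
noncomputable instance : Mul OctPoly :=
  ⟨fun p q => p.sum fun i a => q.sum fun j b => Finsupp.single (i + j) (a * b)⟩

theorem OctPoly.mul_zero (a : OctPoly) : a * (0 : OctPoly) = 0 := by
  show (Finsupp.sum a fun i c => Finsupp.sum 0 fun j b => Finsupp.single (i + j) (c * b)) = 0
  simp

/-- The variable `y` of `𝕆[y]`. -/
noncomputable def Yv : OctPoly := Finsupp.single 1 (1 : Octonion)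

/-- The constant polynomial `1` of `𝕆[y]`. -/
noncomputable def oneR : OctPoly := Finsupp.single 0 (1 : Octonion)

/-- The `y`-degree of a polynomial in `𝕆[y]` (with junk value `0` at `0`). -/
def degy (r : OctPoly) : ℕ := WithBot.unbotD 0 (r.support.max)

/-- The underlying additive group of the Ore extension `S = R[x; σ, δ]`:
finitely supported sequences of coefficients in `R = 𝕆[y]`. -/
noncomputable abbrev OrePoly : Type := ℕ →₀ OctPoly

/-- Left multiplication by `x` in `R[x; σ, δ]`, determined by
`x·(r xʲ) = σ(r) x^(j+1) + δ(r) xʲ`. -/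
noncomputable def xmul (σ δ : OctPoly →+ OctPoly) : OrePoly →+ OrePoly :=
  Finsupp.liftAddHom fun j =>
    (Finsupp.singleAddHom (j + 1)).comp σ + (Finsupp.singleAddHom j).comp δ

/-- The multiplication of the non-associative Ore extension `R[x; σ, δ]`:
`(Σᵢ aᵢ xⁱ)·q = Σᵢ aᵢ·(xⁱ·q)`, where `xⁱ` acts via iterated `xmul` and `aᵢ`
multiplies every coefficient from the left. -/
noncomputable def oreMul (σ δ : OctPoly →+ OctPoly) (p q : OrePoly) : OrePoly :=
  p.sum fun i a => Finsupp.mapRange (a * ·) (OctPoly.mul_zero a) ((xmul σ δ)^[i] q)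

/-- The constant `1 = 1·x⁰` of the Ore extension. -/
noncomputable def oneS : OrePoly := Finsupp.single 0 oneR

/-- The `x`-degree of an element of the Ore extension, valued in `ℤ ∪ {-∞}`. -/
def xdeg (p : OrePoly) : WithBot ℤ := (p.support.max).map (Nat.cast : ℕ → ℤ)

/-- `σ` is a unital `ℝ`-algebra endomorphism of `𝕆[y]`. -/
def IsAlgEndo (σ : OctPoly →+ OctPoly) : Prop :=
  (∀ p q : OctPoly, σ (p * q) = σ p * σ q) ∧ σ oneR = oneR ∧
    (∀ (r : ℝ) (p : OctPoly), σ (r • p) = r • σ p)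

/-- `δ` is a `σ`-derivation of `𝕆[y]`. -/
def IsSigmaDerivation (σ δ : OctPoly →+ OctPoly) : Prop :=
  (∀ p q : OctPoly, δ (p * q) = σ p * δ q + δ p * q) ∧
    (∀ (r : ℝ) (p : OctPoly), δ (r • p) = r • δ p)

/-- An element of `𝕆` is real if it is a real multiple of `1`. -/
def Octonion.IsReal (c : Octonion) : Prop := ∃ r : ℝ, c = r • (1 : Octonion)


/-! ### Auxiliary lemmas -/

section Aux

open Finsupp

/-! #### Octonion facts -/

lemma oct_one_def : (1 : Octonion) = ((1 : Quaternion ℝ), (0 : Quaternion ℝ)) := rfl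

lemma oct_mul_def (a b : Octonion) : a * b = Octonion.omul a b := rfl

lemma oct_one_ne_zero : (1 : Octonion) ≠ 0 := by
  rw [oct_one_def]
  intro h
  exact one_ne_zero (congrArg Prod.fst h)

lemma oct_mul_one (a : Octonion) : a * 1 = a := by
  rw [oct_mul_def, oct_one_def]
  unfold Octonion.omul
  simp
  rfl

/-- The Cayley–Dickson norm on octonions. -/
noncomputable def octN (a : Octonion) : ℝ :=
  Quaternion.normSq a.1 + Quaternion.normSq a.2

lemma re_mul_comm (x y : Quaternion ℝ) : (x * y).re = (y * x).re := by
  simp only [Quaternion.re_mul]; ring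

lemma octN_mul (a b : Octonion) : octN (a * b) = octN a * octN b := by
  rw [oct_mul_def]
  show Quaternion.normSq (a.1 * b.1 - star b.2 * a.2) +
      Quaternion.normSq (b.2 * a.1 + a.2 * star b.1)
    = (Quaternion.normSq a.1 + Quaternion.normSq a.2) *
      (Quaternion.normSq b.1 + Quaternion.normSq b.2)
  have key : ((a.1*b.1) * (star a.2 * b.2)).re = ((b.2*a.1) * (b.1 * star a.2)).re := by
    calc ((a.1*b.1) * (star a.2 * b.2)).re
        = (((a.1*b.1) * star a.2) * b.2).re := by rw [← mul_assoc]
      _ = (b.2 * ((a.1*b.1) * star a.2)).re := re_mul_comm _ _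
      _ = ((b.2*a.1) * (b.1 * star a.2)).re := by rw [mul_assoc a.1 b.1, ← mul_assoc b.2 a.1]
  have h1 : Quaternion.normSq (a.1 * b.1 - star b.2 * a.2)
      = Quaternion.normSq (a.1*b.1) + Quaternion.normSq (star b.2 * a.2)
        - 2 * ((a.1*b.1) * (star a.2 * b.2)).re := by
    rw [sub_eq_add_neg, Quaternion.normSq_add, Quaternion.normSq_neg]
    simp only [star_neg, mul_neg, Quaternion.re_neg, star_mul, star_star]
    ring
  have h2 : Quaternion.normSq (b.2 * a.1 + a.2 * star b.1)
      = Quaternion.normSq (b.2*a.1) + Quaternion.normSq (a.2 * star b.1)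
        + 2 * ((b.2*a.1) * (b.1 * star a.2)).re := by
    rw [Quaternion.normSq_add]
    simp only [star_mul, star_star]
  rw [h1, h2, key]
  simp only [map_mul, Quaternion.normSq_star]
  ring

lemma octN_eq_zero {a : Octonion} : octN a = 0 ↔ a = 0 := by
  constructor
  · intro h
    rw [octN] at h
    have h1 : Quaternion.normSq a.1 = 0 := by
      nlinarith [Quaternion.normSq_nonneg (a := a.1), Quaternion.normSq_nonneg (a := a.2)]
    have h2 : Quaternion.normSq a.2 = 0 := by
      nlinarith [Quaternion.normSq_nonneg (a := a.1), Quaternion.normSq_nonneg (a := a.2)]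
    have : a = ((0 : Quaternion ℝ), (0 : Quaternion ℝ)) :=
      Prod.ext (Quaternion.normSq_eq_zero.mp h1) (Quaternion.normSq_eq_zero.mp h2)
    exact this
  · rintro rfl
    show Quaternion.normSq 0 + Quaternion.normSq 0 = 0
    simp

lemma oct_mul_eq_zero {a b : Octonion} (h : a * b = 0) : a = 0 ∨ b = 0 := by
  by_contra hc
  push_neg at hc
  have ha := octN_eq_zero.not.mpr hc.1
  have hb := octN_eq_zero.not.mpr hc.2
  have : octN (a * b) = 0 := by rw [h]; exact octN_eq_zero.mpr rfl
  rw [octN_mul] at this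
  exact (mul_ne_zero ha hb) this

lemma oct_mul_smul (r : ℝ) (a b : Octonion) : a * (r • b) = r • (a * b) := by
  rw [oct_mul_def, oct_mul_def]
  show Octonion.omul a (r • b.1, r • b.2) = r • Octonion.omul a b
  unfold Octonion.omul
  refine Prod.ext ?_ ?_ <;>
    simp [star_smul, mul_smul_comm, smul_mul_assoc, smul_sub, smul_add, Prod.smul_fst,
      Prod.smul_snd]

lemma oct_exists_inv {c : Octonion} (hc : c ≠ 0) : ∃ d : Octonion, c * d = 1 := by
  have hN : octN c ≠ 0 := octN_eq_zero.not.mpr hc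
  refine ⟨(octN c)⁻¹ • (show Octonion from (star c.1, -c.2)), ?_⟩
  have h1 : c * (show Octonion from (star c.1, -c.2)) = octN c • (1 : Octonion) := by
    rw [oct_mul_def]
    unfold Octonion.omul
    refine Prod.ext ?_ ?_
    · show c.1 * star c.1 - star (-c.2) * c.2 = octN c • (1 : Quaternion ℝ)
      rw [Quaternion.self_mul_star, star_neg, neg_mul, Quaternion.star_mul_self, sub_neg_eq_add]
      rw [show (octN c) • (1 : Quaternion ℝ) = ((octN c : ℝ) : Quaternion ℝ) by
        rw [Algebra.smul_def]; simp [Quaternion.algebraMap_def]]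
      rw [octN, Quaternion.coe_add]
    · show -c.2 * c.1 + c.2 * star (star c.1) = octN c • (0 : Quaternion ℝ)
      rw [star_star, smul_zero, neg_mul, neg_add_cancel]
  rw [oct_mul_smul, h1, smul_smul, inv_mul_cancel₀ hN, one_smul]

/-! #### `OctPoly` degree theory -/

lemma octpoly_mul_def (p q : OctPoly) :
    p * q = p.sum fun i a => q.sum fun j b => Finsupp.single (i + j) (a * b) := rfl

lemma octpoly_zero_mul (p : OctPoly) : (0 : OctPoly) * p = 0 := by
  rw [octpoly_mul_def, Finsupp.sum_zero_index]

lemma octpoly_mul_apply (p q : OctPoly) (k : ℕ) :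
    (p * q) k = ∑ i ∈ p.support, ∑ j ∈ q.support,
      (if i + j = k then p i * q j else 0) := by
  rw [octpoly_mul_def, Finsupp.sum_apply]
  rw [Finsupp.sum]
  refine Finset.sum_congr rfl fun i _ => ?_
  rw [Finsupp.sum_apply, Finsupp.sum]
  refine Finset.sum_congr rfl fun j _ => ?_
  rw [Finsupp.single_apply]

/-- `p` has all coefficients beyond `d` equal to zero. -/
def Bnd (p : OctPoly) (d : ℕ) : Prop := ∀ k, d < k → p k = 0

/-- `p` has degree exactly `d`. -/
def TopAt (p : OctPoly) (d : ℕ) : Prop := p d ≠ 0 ∧ Bnd p d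

lemma Bnd.le {p : OctPoly} {d : ℕ} (hp : Bnd p d) {i : ℕ} (hi : i ∈ p.support) : i ≤ d := by
  by_contra h
  exact Finsupp.mem_support_iff.mp hi (hp i (by omega))

lemma bnd_mul {p q : OctPoly} {d e : ℕ} (hp : Bnd p d) (hq : Bnd q e) :
    Bnd (p * q) (d + e) := by
  intro k hk
  rw [octpoly_mul_apply]
  refine Finset.sum_eq_zero fun i hi => Finset.sum_eq_zero fun j hj => ?_
  have h1 := hp.le hi
  have h2 := hq.le hj
  rw [if_neg (by omega)]

lemma mul_top_apply {p q : OctPoly} {d e : ℕ} (hp : Bnd p d) (hq : Bnd q e) :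
    (p * q) (d + e) = p d * q e := by
  rw [octpoly_mul_apply]
  rw [Finset.sum_eq_single d]
  · rw [Finset.sum_eq_single e]
    · rw [if_pos rfl]
    · intro j _ hne
      rw [if_neg (by omega)]
    · intro he
      rw [Finsupp.notMem_support_iff.mp he, if_pos rfl, mul_zero]
  · intro i hi hne
    refine Finset.sum_eq_zero fun j hj => ?_
    have h1 := hp.le hi
    have h2 := hq.le hj
    rw [if_neg (by omega)]
  · intro hd
    refine Finset.sum_eq_zero fun j _ => ?_
    rw [Finsupp.notMem_support_iff.mp hd, zero_mul]
    split <;> rfl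

lemma topAt_mul {p q : OctPoly} {d e : ℕ} (hp : TopAt p d) (hq : TopAt q e) :
    TopAt (p * q) (d + e) := by
  refine ⟨?_, bnd_mul hp.2 hq.2⟩
  rw [mul_top_apply hp.2 hq.2]
  intro h
  rcases oct_mul_eq_zero h with h' | h'
  · exact hp.1 h'
  · exact hq.1 h'

lemma topAt_unique {p : OctPoly} {d e : ℕ} (hd : TopAt p d) (he : TopAt p e) : d = e := by
  rcases lt_trichotomy d e with h | h | h
  · exact absurd (hd.2 e h) he.1
  · exact h
  · exact absurd (he.2 d h) hd.1

lemma topAt_of_max {p : OctPoly} {d : ℕ} (h : p.support.max = (d : WithBot ℕ)) :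
    TopAt p d := by
  constructor
  · exact Finsupp.mem_support_iff.mp (Finset.mem_of_max h)
  · intro k hk
    by_contra hc
    have hmem : k ∈ p.support := Finsupp.mem_support_iff.mpr hc
    have h3 := Finset.le_max hmem
    rw [h] at h3
    have h4 : k ≤ d := by rw [Nat.cast_withBot] at h3; exact WithBot.coe_le_coe.mp h3
    omega

lemma max_of_topAt {p : OctPoly} {d : ℕ} (h : TopAt p d) :
    p.support.max = (d : WithBot ℕ) := by
  apply le_antisymm
  · exact Finset.max_le fun i hi => WithBot.coe_le_coe.mpr (h.2.le hi)
  · exact Finset.le_max (Finsupp.mem_support_iff.mpr h.1)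

lemma topAt_degy {p : OctPoly} (h : p ≠ 0) : TopAt p (degy p) := by
  have hne : p.support.Nonempty := Finsupp.support_nonempty_iff.mpr h
  obtain ⟨d, hd⟩ := Finset.max_of_nonempty hne
  have hdeg : degy p = d := by rw [degy, hd]; rfl
  rw [hdeg]
  exact topAt_of_max hd

lemma single_mul_single (i j : ℕ) (c e : Octonion) :
    (Finsupp.single i c : OctPoly) * Finsupp.single j e = Finsupp.single (i + j) (c * e) := by
  rw [octpoly_mul_def]
  rw [Finsupp.sum_single_index (by simp), Finsupp.sum_single_index (by simp)]

lemma topAt_oneR : TopAt oneR 0 := by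
  constructor
  · show (Finsupp.single 0 (1 : Octonion)) 0 ≠ 0
    rw [Finsupp.single_eq_same]
    exact oct_one_ne_zero
  · intro k hk
    show (Finsupp.single 0 (1 : Octonion)) k = 0
    rw [Finsupp.single_apply, if_neg (by omega)]

end Aux

section Aux2

open Finsupp

/-! #### Endomorphism degree lemmas -/

variable {σ : OctPoly →+ OctPoly} {s : ℕ}

lemma sigma_pow (hσ : IsAlgEndo σ) (hs : TopAt (σ Yv) s) (j : ℕ) :
    TopAt (σ (Finsupp.single j (1 : Octonion))) (s * j) := by
  induction j with
  | zero =>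
    have h0 : (Finsupp.single 0 (1 : Octonion) : OctPoly) = oneR := rfl
    rw [Nat.mul_zero, h0, hσ.2.1]
    exact topAt_oneR
  | succ j ih =>
    have h1 : (Finsupp.single (j+1) (1 : Octonion) : OctPoly) = Yv * Finsupp.single j 1 := by
      rw [Yv, single_mul_single, oct_mul_one, Nat.add_comm]
    rw [h1, hσ.1]
    have h2 := topAt_mul hs ih
    rwa [show s + s * j = s * (j+1) by ring] at h2

lemma sigma_const (hσ : IsAlgEndo σ) {c : Octonion} (hc : c ≠ 0) :
    TopAt (σ (Finsupp.single 0 c)) 0 := by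
  obtain ⟨d, hd⟩ := oct_exists_inv hc
  have h1 : (Finsupp.single 0 c : OctPoly) * Finsupp.single 0 d = oneR := by
    rw [single_mul_single, hd]; rfl
  have h2 : σ (Finsupp.single 0 c) * σ (Finsupp.single 0 d) = oneR := by
    rw [← hσ.1, h1, hσ.2.1]
  have hne1 : σ (Finsupp.single 0 c) ≠ 0 := by
    intro h
    rw [h, octpoly_zero_mul] at h2
    exact topAt_oneR.1 (by rw [← h2]; rfl)
  have hne2 : σ (Finsupp.single 0 d) ≠ 0 := by
    intro h
    rw [h, OctPoly.mul_zero] at h2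
    exact topAt_oneR.1 (by rw [← h2]; rfl)
  have t1 := topAt_degy hne1
  have t2 := topAt_degy hne2
  have t3 := topAt_mul t1 t2
  rw [h2] at t3
  have := topAt_unique t3 topAt_oneR
  have hz : degy (σ (Finsupp.single 0 c)) = 0 := by omega
  rwa [hz] at t1

lemma sigma_single (hσ : IsAlgEndo σ) (hs : TopAt (σ Yv) s) {j : ℕ} {c : Octonion}
    (hc : c ≠ 0) : TopAt (σ (Finsupp.single j c)) (s * j) := by
  have h1 : (Finsupp.single j c : OctPoly) = Finsupp.single 0 c * Finsupp.single j 1 := by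
    rw [single_mul_single, oct_mul_one, Nat.zero_add]
  rw [h1, hσ.1]
  have h2 := topAt_mul (sigma_const hσ hc) (sigma_pow hσ hs j)
  rwa [Nat.zero_add] at h2

lemma sigma_topAt (hσ : IsAlgEndo σ) (hs : TopAt (σ Yv) s) (hs0 : 0 < s)
    {p : OctPoly} {d : ℕ} (h : TopAt p d) : TopAt (σ p) (s * d) := by
  have hrep : σ p = ∑ j ∈ p.support, σ (Finsupp.single j (p j)) := by
    conv_lhs => rw [← Finsupp.sum_single p]
    rw [map_finsuppSum, Finsupp.sum]
  constructor
  · rw [hrep, Finset.sum_apply']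
    rw [Finset.sum_eq_single d]
    · exact (sigma_single hσ hs h.1).1
    · intro j hj hne
      have hj0 : p j ≠ 0 := Finsupp.mem_support_iff.mp hj
      have hjd : j ≤ d := h.2.le hj
      exact (sigma_single hσ hs hj0).2 (s * d)
        (by refine (Nat.mul_lt_mul_left hs0).mpr ?_; omega)
    · intro hd
      exact absurd (Finsupp.mem_support_iff.mpr h.1) hd
  · intro k hk
    rw [hrep, Finset.sum_apply']
    refine Finset.sum_eq_zero fun j hj => ?_
    have hj0 : p j ≠ 0 := Finsupp.mem_support_iff.mp hj
    have hjd : j ≤ d := h.2.le hj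
    exact (sigma_single hσ hs hj0).2 k
      (by calc s * j ≤ s * d := Nat.mul_le_mul_left s hjd
            _ < k := hk)

lemma sigma_iter_topAt (hσ : IsAlgEndo σ) (hs : TopAt (σ Yv) s) (hs0 : 0 < s)
    (i : ℕ) {p : OctPoly} {d : ℕ} (h : TopAt p d) :
    TopAt ((⇑σ)^[i] p) (s ^ i * d) := by
  induction i with
  | zero => simpa using h
  | succ i ih =>
    rw [Function.iterate_succ_apply']
    have h2 := sigma_topAt hσ hs hs0 ih
    rwa [show s * (s ^ i * d) = s ^ (i+1) * d by ring] at h2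

/-! #### `xmul` and `oreMul` coefficient lemmas -/

variable {δ : OctPoly →+ OctPoly}

lemma xmul_single (j : ℕ) (c : OctPoly) :
    xmul σ δ (Finsupp.single j c)
      = Finsupp.single (j+1) (σ c) + Finsupp.single j (δ c) := by
  rw [xmul, Finsupp.liftAddHom_apply_single]
  rfl

lemma xmul_apply_succ (p : OrePoly) (k : ℕ) :
    xmul σ δ p (k+1) = σ (p k) + δ (p (k+1)) := by
  induction p using Finsupp.induction_linear with
  | zero => simp
  | add p q hp hq => simp only [map_add, Finsupp.add_apply, hp, hq]; abel
  | single j c =>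
    rw [xmul_single]
    simp only [Finsupp.add_apply, Finsupp.single_apply, apply_ite σ, apply_ite δ, map_zero]
    by_cases h1 : j = k <;> by_cases h2 : j = k + 1 <;>
      simp [h1, h2]

lemma xmul_bnd {p : OrePoly} {d : ℕ} (h : ∀ k, d < k → p k = 0) :
    ∀ k, d + 1 < k → xmul σ δ p k = 0 := by
  intro k hk
  obtain ⟨k', rfl⟩ : ∃ k', k = k' + 1 := ⟨k - 1, by omega⟩
  rw [xmul_apply_succ, h k' (by omega), h (k'+1) (by omega), map_zero, map_zero, add_zero]

lemma xmul_iter (i : ℕ) {p : OrePoly} {d : ℕ} (h : ∀ k, d < k → p k = 0) :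
    ((xmul σ δ)^[i] p) (d + i) = (⇑σ)^[i] (p d) ∧
      ∀ k, d + i < k → ((xmul σ δ)^[i] p) k = 0 := by
  induction i with
  | zero => exact ⟨rfl, by simpa using h⟩
  | succ i ih =>
    refine ⟨?_, ?_⟩
    · rw [show d + (i+1) = (d + i) + 1 by omega, Function.iterate_succ_apply',
        xmul_apply_succ, ih.1, ih.2 (d+i+1) (by omega), map_zero, add_zero,
        Function.iterate_succ_apply']
    · intro k hk
      rw [Function.iterate_succ_apply']
      exact xmul_bnd ih.2 k (by omega)

lemma oreMul_top {a b : OrePoly} {m n : ℕ}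
    (ha : ∀ k, m < k → a k = 0) (hb : ∀ k, n < k → b k = 0) :
    oreMul σ δ a b (m + n) = a m * (⇑σ)^[m] (b n) := by
  rw [oreMul, Finsupp.sum_apply, Finsupp.sum]
  rw [Finset.sum_eq_single m]
  · rw [Finsupp.mapRange_apply, show m + n = n + m by omega, (xmul_iter m hb).1]
  · intro i hi hne
    have hi' : a i ≠ 0 := Finsupp.mem_support_iff.mp hi
    have him : i ≤ m := by
      by_contra hc
      exact hi' (ha i (by omega))
    rw [Finsupp.mapRange_apply, (xmul_iter i hb).2 (m + n) (by omega), OctPoly.mul_zero]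
  · intro hm
    rw [Finsupp.mapRange_apply, Finsupp.notMem_support_iff.mp hm, octpoly_zero_mul]

end Aux2
/-- Membership in the nucleus of the Ore extension `R[x; σ, δ]`. -/
def OreNucleus (σ δ : OctPoly →+ OctPoly) (a : OrePoly) : Prop :=
  (∀ b c : OrePoly, oreMul σ δ a (oreMul σ δ b c) = oreMul σ δ (oreMul σ δ a b) c) ∧
  (∀ b c : OrePoly, oreMul σ δ (oreMul σ δ b a) c = oreMul σ δ b (oreMul σ δ a c)) ∧
  (∀ b c : OrePoly, oreMul σ δ (oreMul σ δ b c) a = oreMul σ δ b (oreMul σ δ c a))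

/-- Let `a, b` be elements of the Ore extension `S = 𝕆[y][x; σ, δ]` with
`deg_y (σ y) = s > 1`, where `a` has `x`-degree `m > 0` with leading coefficient
`a_m`, and `b ≠ 0` has `x`-degree `n` with leading coefficient `b_n`.  If
`a·b = b·a`, then `a_m σᵐ(b_n) = b_n σⁿ(a_m)`, and consequently
`deg_y a_m + sᵐ·deg_y b_n = deg_y b_n + sⁿ·deg_y a_m`, so `deg_y b_n` is uniquely
determined by `m`, `n`, `s` and `deg_y a_m`. -/
theorem leading_coeff_eq_of_commute (σ δ : OctPoly →+ OctPoly)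
    (hσ : IsAlgEndo σ) (s : ℕ) (hs : (σ Yv).support.max = (s : WithBot ℕ)) (hs1 : 1 < s)
    (hδ : IsSigmaDerivation σ δ)
    (a b : OrePoly) (m n : ℕ)
    (hm : a.support.max = (m : WithBot ℕ)) (hmpos : 0 < m)
    (hb : b ≠ 0) (hn : b.support.max = (n : WithBot ℕ))
    (hcomm : oreMul σ δ a b = oreMul σ δ b a) :
    a m * (⇑σ)^[m] (b n) = b n * (⇑σ)^[n] (a m) ∧
    degy (a m) + s ^ m * degy (b n) = degy (b n) + s ^ n * degy (a m) := by
  -- Basic consequences of the degree hypotheses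
  have haM : a m ≠ 0 := Finsupp.mem_support_iff.mp (Finset.mem_of_max hm)
  have hbM : b n ≠ 0 := Finsupp.mem_support_iff.mp (Finset.mem_of_max hn)
  have haB : ∀ k, m < k → a k = 0 := by
    intro k hk
    by_contra hc
    have h3 := Finset.le_max (Finsupp.mem_support_iff.mpr hc)
    rw [hm, Nat.cast_withBot] at h3
    exact absurd (WithBot.coe_le_coe.mp h3) (by omega)
  have hbB : ∀ k, n < k → b k = 0 := by
    intro k hk
    by_contra hc
    have h3 := Finset.le_max (Finsupp.mem_support_iff.mpr hc)
    rw [hn, Nat.cast_withBot] at h3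
    exact absurd (WithBot.coe_le_coe.mp h3) (by omega)
  have hsT : TopAt (σ Yv) s := topAt_of_max hs
  have hs0 : 0 < s := by omega
  -- Part 1: the leading coefficient identity
  have part1 : a m * (⇑σ)^[m] (b n) = b n * (⇑σ)^[n] (a m) := by
    have h1 := oreMul_top (σ := σ) (δ := δ) haB hbB
    have h2 := oreMul_top (σ := σ) (δ := δ) hbB haB
    have h3 := congrArg (fun f : OrePoly => f (m + n)) hcomm
    rw [h1, show m + n = n + m by omega, h2] at h3
    exact h3
  refine ⟨part1, ?_⟩
  -- Part 2: the degree identity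
  have t1 : TopAt (a m) (degy (a m)) := topAt_degy haM
  have t2 : TopAt (b n) (degy (b n)) := topAt_degy hbM
  have t3 : TopAt ((⇑σ)^[m] (b n)) (s ^ m * degy (b n)) := sigma_iter_topAt hσ hsT hs0 m t2
  have t4 : TopAt ((⇑σ)^[n] (a m)) (s ^ n * degy (a m)) := sigma_iter_topAt hσ hsT hs0 n t1
  have L := topAt_mul t1 t3
  have R := topAt_mul t2 t4
  rw [part1] at L
  exact topAt_unique L R
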